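/- The number of vertices of the polytope Π = {v ∈ ℝ^r : Σvᵢ = 0, −1 ≤ vᵢ ≤ 1} equals r!/((r/2)!)² when r is even, and r!/(((r−1)/2)!)² when r is odd. -/

import Mathlib

def Pio (r : ℕ) : Set (Fin r → ℝ) :=
  {v | (∑ i, v i) = 0 ∧ ∀ i, -1 ≤ v i ∧ v i ≤ 1}

open Finset

namespace Stmt6

variable {r : ℕ}

/-- Sum of a ±1-valued function over a finset. -/
lemma sum_pm (s : Finset (Fin r)) (v : Fin r → ℝ) (hv : ∀ i ∈ s, v i = 1 ∨ v i = -1) :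
    ∑ i ∈ s, v i = 2 * ((s.filter (fun i => v i = 1)).card : ℝ) - s.card := by
  classical
  rw [← Finset.sum_filter_add_sum_filter_not s (fun i => v i = 1)]
  have h1 : ∑ i ∈ s.filter (fun i => v i = 1), v i
      = ((s.filter (fun i => v i = 1)).card : ℝ) := by
    rw [Finset.sum_congr rfl (fun i hi => (Finset.mem_filter.1 hi).2), Finset.sum_const,
      nsmul_eq_mul, mul_one]
  have h2 : ∑ i ∈ s.filter (fun i => ¬ v i = 1), v i
      = -(((s.filter (fun i => ¬ v i = 1)).card : ℝ)) := by
    rw [Finset.sum_congr rfl (fun i hi => ?_), Finset.sum_const, nsmul_eq_mul, mul_neg_one]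
    rcases hv i (Finset.mem_filter.1 hi).1 with h | h
    · exact absurd h (Finset.mem_filter.1 hi).2
    · exact h
  have h3 := Finset.card_filter_add_card_filter_not (s := s) (p := fun i => v i = 1)
  rw [h1, h2]
  have h4 : ((s.filter (fun i => ¬ v i = 1)).card : ℝ)
      = (s.card : ℝ) - ((s.filter (fun i => v i = 1)).card : ℝ) := by
    have := congrArg (fun n : ℕ => (n : ℝ)) h3
    push_cast at this ⊢
    linarith
  rw [h4]; ring

/-- In `Pio r`, the value at `i` is determined by the values elsewhere. -/
lemma coord_eq (v : Fin r → ℝ) (hv : v ∈ Pio r) (i : Fin r) :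
    v i = -∑ k ∈ Finset.univ.erase i, v k := by
  have h := Finset.sum_erase_add Finset.univ v (Finset.mem_univ i)
  have h0 : (∑ k, v k) = 0 := hv.1
  linarith [h.trans h0]

/-- An extreme point has at most one coordinate not equal to ±1. -/
lemma atMostOne (v : Fin r → ℝ) (hv : v ∈ Set.extremePoints ℝ (Pio r))
    (i j : Fin r) (hi1 : v i ≠ 1) (hi2 : v i ≠ -1) (hj1 : v j ≠ 1) (hj2 : v j ≠ -1) :
    i = j := by
  classical
  by_contra hij
  obtain ⟨hmem, hext⟩ := _root_.mem_extremePoints.1 hv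
  obtain ⟨hsum, hbd⟩ := hmem
  have hi : -1 < v i ∧ v i < 1 :=
    ⟨lt_of_le_of_ne (hbd i).1 (Ne.symm hi2), lt_of_le_of_ne (hbd i).2 hi1⟩
  have hj : -1 < v j ∧ v j < 1 :=
    ⟨lt_of_le_of_ne (hbd j).1 (Ne.symm hj2), lt_of_le_of_ne (hbd j).2 hj1⟩
  set ε : ℝ := min (min (1 - v i) (1 + v i)) (min (1 - v j) (1 + v j)) with hε
  have hεpos : 0 < ε := by
    apply lt_min <;> apply lt_min <;> linarith [hi.1, hi.2, hj.1, hj.2]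
  have hε1 : ε ≤ 1 - v i := le_trans (min_le_left _ _) (min_le_left _ _)
  have hε2 : ε ≤ 1 + v i := le_trans (min_le_left _ _) (min_le_right _ _)
  have hε3 : ε ≤ 1 - v j := le_trans (min_le_right _ _) (min_le_left _ _)
  have hε4 : ε ≤ 1 + v j := le_trans (min_le_right _ _) (min_le_right _ _)
  set x₁ : Fin r → ℝ := fun k => v k + (if k = i then ε else 0) - (if k = j then ε else 0) with hx₁
  set x₂ : Fin r → ℝ := fun k => v k - (if k = i then ε else 0) + (if k = j then ε else 0) with hx₂
  have hsum1 : ∀ (w : Fin r → ℝ), (∑ k, (if k = i then ε else 0)) = ε := by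
    intro w; simp [Finset.sum_ite_eq']
  have hx₁mem : x₁ ∈ Pio r := by
    constructor
    · rw [hx₁]
      simp only [Finset.sum_add_distrib, Finset.sum_sub_distrib]
      rw [hsum, Finset.sum_ite_eq' Finset.univ i (fun _ => ε),
        Finset.sum_ite_eq' Finset.univ j (fun _ => ε)]
      simp
    · intro k
      simp only [hx₁]
      by_cases hki : k = i
      · subst hki; rw [if_pos rfl, if_neg hij]
        constructor <;> simp <;> linarith [hi.1]
      · by_cases hkj : k = j
        · subst hkj; rw [if_neg hki, if_pos rfl]
          constructor <;> simp <;> linarith [hj.2]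
        · rw [if_neg hki, if_neg hkj]
          simpa using hbd k
  have hx₂mem : x₂ ∈ Pio r := by
    constructor
    · rw [hx₂]
      simp only [Finset.sum_add_distrib, Finset.sum_sub_distrib]
      rw [hsum, Finset.sum_ite_eq' Finset.univ i (fun _ => ε),
        Finset.sum_ite_eq' Finset.univ j (fun _ => ε)]
      simp
    · intro k
      simp only [hx₂]
      by_cases hki : k = i
      · subst hki; rw [if_pos rfl, if_neg hij]
        constructor <;> simp <;> linarith [hi.2]
      · by_cases hkj : k = j
        · subst hkj; rw [if_neg hki, if_pos rfl]
          constructor <;> simp <;> linarith [hj.1]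
        · rw [if_neg hki, if_neg hkj]
          simpa using hbd k
  have hseg : v ∈ openSegment ℝ x₁ x₂ := by
    refine ⟨1/2, 1/2, by norm_num, by norm_num, by norm_num, ?_⟩
    funext k
    simp only [hx₁, hx₂, Pi.add_apply, Pi.smul_apply, smul_eq_mul]
    ring
  have h := congrFun (hext x₁ hx₁mem x₂ hx₂mem hseg).1 i
  simp only [hx₁, if_pos rfl, if_neg hij, sub_zero, if_true, eq_self_iff_true] at h
  linarith

/-- Sufficient condition for being an extreme point of `Pio r`. -/
lemma extreme_of (v : Fin r → ℝ) (hmem : v ∈ Pio r)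
    (hone : ∀ i j, v i ≠ 1 → v i ≠ -1 → v j ≠ 1 → v j ≠ -1 → i = j) :
    v ∈ Set.extremePoints ℝ (Pio r) := by
  classical
  refine _root_.mem_extremePoints.2 ⟨hmem, ?_⟩
  rintro x₁ hx₁ x₂ hx₂ ⟨a, b, ha, hb, hab, hv⟩
  have key : ∀ k, (v k = 1 ∨ v k = -1) → x₁ k = v k ∧ x₂ k = v k := by
    intro k hk
    have h1 := (hx₁.2 k); have h2 := (hx₂.2 k)
    have hvk : a * x₁ k + b * x₂ k = v k := by
      rw [← hv]; simp
    rcases hk with h | h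
    · constructor <;> nlinarith [h1.2, h2.2]
    · constructor <;> nlinarith [h1.1, h2.1]
  -- every coordinate except possibly one special one is ±1
  have hagree : ∀ w ∈ Pio r, (∀ k, (v k = 1 ∨ v k = -1) → w k = v k) → w = v := by
    intro w hw hwk
    by_cases hall : ∀ k, v k = 1 ∨ v k = -1
    · funext k; exact hwk k (hall k)
    · push_neg at hall
      obtain ⟨i₀, hi₀1, hi₀2⟩ := hall
      funext k
      by_cases hk : v k = 1 ∨ v k = -1
      · exact hwk k hk
      · push_neg at hk
        have : k = i₀ := hone k i₀ hk.1 hk.2 hi₀1 hi₀2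
        subst this
        rw [coord_eq w hw k, coord_eq v hmem k]
        congr 1
        apply Finset.sum_congr rfl
        intro m hm
        have hmk : m ≠ k := (Finset.mem_erase.1 hm).1
        apply hwk
        by_contra hmbad
        push_neg at hmbad
        exact hmk (hone m k hmbad.1 hmbad.2 hk.1 hk.2)
  constructor
  · exact hagree x₁ hx₁ (fun k hk => (key k hk).1)
  · exact hagree x₂ hx₂ (fun k hk => (key k hk).2)

/-- The candidate vertices in the even case. -/
noncomputable def gmap (r : ℕ) (s : Finset (Fin r)) : Fin r → ℝ :=
  fun i => if i ∈ s then 1 else -1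

/-- The candidate vertices in the odd case. -/
noncomputable def hmap (r : ℕ) (p : Fin r × Finset (Fin r)) : Fin r → ℝ :=
  fun j => if j = p.1 then 0 else if j ∈ p.2 then 1 else -1

lemma gmap_pm (s : Finset (Fin r)) (i : Fin r) : gmap r s i = 1 ∨ gmap r s i = -1 := by
  unfold gmap; split <;> simp

lemma filter_gmap (s : Finset (Fin r)) (t : Finset (Fin r)) :
    t.filter (fun i => gmap r s i = 1) = t ∩ s := by
  ext i
  simp only [Finset.mem_filter, Finset.mem_inter]
  simp only [gmap]
  constructor
  · rintro ⟨hit, h⟩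
    refine ⟨hit, ?_⟩
    by_contra hmem
    rw [if_neg hmem] at h; norm_num at h
  · rintro ⟨hit, hmem⟩
    exact ⟨hit, by rw [if_pos hmem]⟩

lemma gmap_mem (s : Finset (Fin r)) (hs : 2 * s.card = r) : gmap r s ∈ Pio r := by
  constructor
  · rw [sum_pm Finset.univ (gmap r s) (fun i _ => gmap_pm s i), filter_gmap,
      Finset.univ_inter, Finset.card_univ, Fintype.card_fin]
    have : ((2 * s.card : ℕ) : ℝ) = (r : ℝ) := by exact_mod_cast hs
    push_cast at this
    linarith
  · intro i
    rcases gmap_pm s i with h | h <;> rw [h] <;> norm_num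

lemma gmap_extreme (s : Finset (Fin r)) (hs : 2 * s.card = r) :
    gmap r s ∈ Set.extremePoints ℝ (Pio r) := by
  refine extreme_of _ (gmap_mem s hs) ?_
  intro i j hi1 hi2 _ _
  rcases gmap_pm s i with h | h <;> exact absurd h (by assumption)

lemma gmap_inj : Function.Injective (gmap r) := by
  intro s t h
  have hs := filter_gmap s Finset.univ
  have ht := filter_gmap t Finset.univ
  rw [Finset.univ_inter] at hs ht
  rw [← hs, ← ht, h]

lemma hmap_mem (p : Fin r × Finset (Fin r)) (hp : p.1 ∉ p.2) (hc : 2 * p.2.card + 1 = r) :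
    hmap r p ∈ Pio r := by
  obtain ⟨i, s⟩ := p
  simp only at hp hc
  have hpm : ∀ k ∈ Finset.univ.erase i, hmap r (i, s) k = 1 ∨ hmap r (i, s) k = -1 := by
    intro k hk
    have hki : k ≠ i := (Finset.mem_erase.1 hk).1
    unfold hmap
    simp only [if_neg hki]
    split <;> simp
  have hfilter : (Finset.univ.erase i).filter (fun k => hmap r (i, s) k = 1) = s := by
    ext k
    simp only [Finset.mem_filter, Finset.mem_erase, Finset.mem_univ, and_true, true_and]
    constructor
    · rintro ⟨hki, h⟩
      unfold hmap at h
      simp only [if_neg hki] at h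
      by_contra hmem
      rw [if_neg hmem] at h; norm_num at h
    · intro hmem
      have hki : k ≠ i := fun h => hp (h ▸ hmem)
      refine ⟨hki, ?_⟩
      unfold hmap
      rw [if_neg hki, if_pos hmem]
  constructor
  · have h := Finset.sum_erase_add Finset.univ (hmap r (i, s)) (Finset.mem_univ i)
    rw [sum_pm _ _ hpm, hfilter] at h
    have hi0 : hmap r (i, s) i = 0 := by unfold hmap; rw [if_pos rfl]
    rw [hi0, add_zero] at h
    rw [← h, Finset.card_erase_of_mem (Finset.mem_univ i), Finset.card_univ, Fintype.card_fin]
    have h1 : (1 : ℕ) ≤ r := by omega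
    have : ((2 * s.card : ℕ) : ℝ) = ((r - 1 : ℕ) : ℝ) := by
      exact_mod_cast (by omega : 2 * s.card = r - 1)
    push_cast at this
    linarith
  · intro k
    unfold hmap
    split
    · norm_num
    · split <;> norm_num

lemma hmap_extreme (p : Fin r × Finset (Fin r)) (hp : p.1 ∉ p.2) (hc : 2 * p.2.card + 1 = r) :
    hmap r p ∈ Set.extremePoints ℝ (Pio r) := by
  refine extreme_of _ (hmap_mem p hp hc) ?_
  have key : ∀ a, hmap r p a ≠ 1 → hmap r p a ≠ -1 → a = p.1 := by
    intro a h1 h2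
    by_contra ha
    unfold hmap at h1 h2
    rw [if_neg ha] at h1 h2
    rcases (em (a ∈ p.2)) with h | h
    · rw [if_pos h] at h1; exact h1 rfl
    · rw [if_neg h] at h2; exact h2 rfl
  intro a b ha1 ha2 hb1 hb2
  rw [key a ha1 ha2, key b hb1 hb2]

lemma hmap_injOn :
    Set.InjOn (hmap r) {p | p.1 ∉ p.2 ∧ 2 * p.2.card + 1 = r} := by
  rintro ⟨i, s⟩ hp ⟨j, t⟩ hq h
  have hval : ∀ k, hmap r (i, s) k = hmap r (j, t) k := fun k => congrFun h k
  have hij : i = j := by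
    by_contra hij
    have := hval i
    unfold hmap at this
    rw [if_pos rfl, if_neg hij] at this
    rcases em (i ∈ t) with h' | h'
    · rw [if_pos h'] at this; norm_num at this
    · rw [if_neg h'] at this; norm_num at this
  subst hij
  have hst : s = t := by
    ext k
    by_cases hki : k = i
    · subst hki
      simp only [Set.mem_setOf_eq] at hp hq
      exact ⟨fun hmem => absurd hmem hp.1, fun hmem => absurd hmem hq.1⟩
    · have := hval k
      unfold hmap at this
      simp only [if_neg hki] at this
      constructor
      · intro hmem
        rw [if_pos hmem] at this
        by_contra hmem'
        rw [if_neg hmem'] at this; norm_num at this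
      · intro hmem
        rw [if_pos hmem] at this
        by_contra hmem'
        rw [if_neg hmem'] at this; norm_num at this
  rw [hst]

/-- Characterization of extreme points: all coordinates ±1 except one special one. -/
lemma extreme_struct (v : Fin r → ℝ) (hv : v ∈ Set.extremePoints ℝ (Pio r)) :
    (∀ i, v i = 1 ∨ v i = -1) ∨
      (∃ i₀, v i₀ = 0 ∧ 2 * ((Finset.univ.erase i₀).filter (fun k => v k = 1)).card + 1 = r ∧
        ∀ j, j ≠ i₀ → (v j = 1 ∨ v j = -1)) := by
  classical
  by_cases hall : ∀ i, v i = 1 ∨ v i = -1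
  · exact Or.inl hall
  · push_neg at hall
    obtain ⟨i₀, h1, h2⟩ := hall
    have hmem : v ∈ Pio r := hv.1
    have hgood : ∀ j, j ≠ i₀ → (v j = 1 ∨ v j = -1) := by
      intro j hj
      by_contra hbad
      push_neg at hbad
      exact hj (atMostOne v hv j i₀ hbad.1 hbad.2 h1 h2)
    right
    set m := ((Finset.univ.erase i₀).filter (fun k => v k = 1)).card with hm
    have hsum : ∑ k ∈ Finset.univ.erase i₀, v k
        = 2 * (m : ℝ) - ((Finset.univ.erase i₀).card : ℝ) := by
      exact sum_pm _ v (fun k hk => hgood k (Finset.mem_erase.1 hk).1)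
    have hcard : (Finset.univ.erase i₀).card = r - 1 := by
      rw [Finset.card_erase_of_mem (Finset.mem_univ i₀), Finset.card_univ, Fintype.card_fin]
    have hr1 : 1 ≤ r := i₀.pos
    have hvi : v i₀ = ((r - 1 : ℕ) : ℝ) - 2 * m := by
      rw [coord_eq v hmem i₀, hsum, hcard]; ring
    have hlt : -1 < v i₀ ∧ v i₀ < 1 := by
      have := hmem.2 i₀
      exact ⟨lt_of_le_of_ne this.1 (Ne.symm h2), lt_of_le_of_ne this.2 h1⟩
    have hnat1 : (r : ℝ) - 1 < 2 * m + 1 := by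
      have : ((r - 1 : ℕ) : ℝ) = (r : ℝ) - 1 := by push_cast [hr1]; ring
      rw [hvi, this] at hlt
      linarith [hlt.2]
    have hnat2 : 2 * (m : ℝ) - 1 < (r : ℝ) - 1 := by
      have : ((r - 1 : ℕ) : ℝ) = (r : ℝ) - 1 := by push_cast [hr1]; ring
      rw [hvi, this] at hlt
      linarith [hlt.1]
    have h1' : r < 2 * m + 2 := by
      have : (r : ℝ) < ((2 * m + 2 : ℕ) : ℝ) := by push_cast; linarith
      exact_mod_cast this
    have h2' : 2 * m < r := by
      have : ((2 * m : ℕ) : ℝ) < (r : ℝ) := by push_cast; linarith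
      exact_mod_cast this
    have heq : 2 * m + 1 = r := by omega
    refine ⟨i₀, ?_, heq, hgood⟩
    rw [hvi]
    have : (r - 1 : ℕ) = 2 * m := by omega
    rw [this]
    push_cast
    ring

lemma even_char (hr : Even r) :
    Set.extremePoints ℝ (Pio r) = gmap r '' {s : Finset (Fin r) | 2 * s.card = r} := by
  ext v
  constructor
  · intro hv
    rcases extreme_struct v hv with hall | ⟨i₀, _, hodd, _⟩
    · set s := Finset.univ.filter (fun i => v i = 1) with hs
      have hmem : v ∈ Pio r := hv.1
      have hsum : (0 : ℝ) = 2 * (s.card : ℝ) - r := by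
        rw [← hmem.1, sum_pm Finset.univ v (fun i _ => hall i)]
        rw [Finset.card_univ, Fintype.card_fin]
      have hcard : 2 * s.card = r := by
        have : 2 * (s.card : ℝ) = (r : ℝ) := by linarith
        exact_mod_cast this
      refine ⟨s, hcard, ?_⟩
      funext i
      unfold gmap
      rcases hall i with h | h
      · rw [if_pos (by simp [hs, h]), h]
      · rw [if_neg (by simp [hs, h]; norm_num), h]
    · exfalso
      rcases hr with ⟨t, ht⟩
      omega
  · rintro ⟨s, hs, rfl⟩
    exact gmap_extreme s hs

lemma odd_char (hr : ¬ Even r) :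
    Set.extremePoints ℝ (Pio r)
      = hmap r '' {p : Fin r × Finset (Fin r) | p.1 ∉ p.2 ∧ 2 * p.2.card + 1 = r} := by
  ext v
  constructor
  · intro hv
    rcases extreme_struct v hv with hall | ⟨i₀, hz, hodd, hgood⟩
    · exfalso
      have hmem : v ∈ Pio r := hv.1
      set s := Finset.univ.filter (fun i => v i = 1) with hs
      have hsum : (0 : ℝ) = 2 * (s.card : ℝ) - r := by
        rw [← hmem.1, sum_pm Finset.univ v (fun i _ => hall i)]
        rw [Finset.card_univ, Fintype.card_fin]
      have hcard : 2 * s.card = r := by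
        have : 2 * (s.card : ℝ) = (r : ℝ) := by linarith
        exact_mod_cast this
      exact hr ⟨s.card, by omega⟩
    · set s := (Finset.univ.erase i₀).filter (fun k => v k = 1) with hs
      have hi₀s : i₀ ∉ s := by
        intro h
        exact absurd (Finset.mem_erase.1 (Finset.mem_filter.1 h).1).1 (by simp)
      refine ⟨(i₀, s), ⟨hi₀s, hodd⟩, ?_⟩
      funext k
      unfold hmap
      by_cases hk : k = i₀
      · rw [if_pos hk, hk, hz]
      · rw [if_neg hk]
        rcases hgood k hk with h | h
        · rw [if_pos (by simp [hs, Finset.mem_filter, Finset.mem_erase, hk, h]), h]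
        · rw [if_neg (by simp [hs, Finset.mem_filter, Finset.mem_erase, hk, h]; norm_num), h]
  · rintro ⟨p, hp, rfl⟩
    exact hmap_extreme p hp.1 hp.2

end Stmt6

theorem stmt6 (r : ℕ) :
    (Set.extremePoints ℝ (Pio r)).ncard =
      if Even r then r.factorial / ((r / 2).factorial) ^ 2
      else r.factorial / (((r - 1) / 2).factorial) ^ 2 := by
  classical
  by_cases hr : Even r
  · rw [if_pos hr, Stmt6.even_char hr]
    have hset : {s : Finset (Fin r) | 2 * s.card = r}
        = ↑(Finset.powersetCard (r / 2) (Finset.univ : Finset (Fin r))) := by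
      ext s
      simp only [Set.mem_setOf_eq, Finset.mem_coe, Finset.mem_powersetCard]
      constructor
      · intro h
        exact ⟨Finset.subset_univ s, by omega⟩
      · rintro ⟨-, h⟩
        obtain ⟨t, ht⟩ := hr
        omega
    rw [hset, Set.ncard_image_of_injective _ Stmt6.gmap_inj, Set.ncard_coe_finset,
      Finset.card_powersetCard, Finset.card_univ, Fintype.card_fin]
    rw [Nat.choose_eq_factorial_div_factorial (Nat.div_le_self r 2)]
    congr 1
    have h2 : r - r / 2 = r / 2 := by obtain ⟨t, ht⟩ := hr; omega
    rw [h2, sq]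
  · rw [if_neg hr, Stmt6.odd_char hr]
    set k := (r - 1) / 2 with hk
    have hrodd : ∃ t, r = 2 * t + 1 := by
      rcases Nat.even_or_odd r with h | h
      · exact absurd h hr
      · obtain ⟨t, ht⟩ := h
        exact ⟨t, by omega⟩
    obtain ⟨t, ht⟩ := hrodd
    have hkt : k = t := by omega
    set F : Finset (Fin r × Finset (Fin r)) :=
      Finset.univ.biUnion (fun i => (Finset.powersetCard k (Finset.univ.erase i)).image
        (fun s => (i, s))) with hF
    have hset : {p : Fin r × Finset (Fin r) | p.1 ∉ p.2 ∧ 2 * p.2.card + 1 = r} = ↑F := by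
      ext ⟨i, s⟩
      simp only [Set.mem_setOf_eq, Finset.mem_coe, hF, Finset.mem_biUnion, Finset.mem_image,
        Finset.mem_powersetCard, Finset.mem_univ, true_and]
      constructor
      · rintro ⟨hi, hc⟩
        exact ⟨i, s, ⟨Finset.subset_erase.2 ⟨Finset.subset_univ s, hi⟩, by omega⟩, rfl⟩
      · rintro ⟨a, s', ⟨hsub, hcard⟩, heq⟩
        obtain ⟨rfl, rfl⟩ : a = i ∧ s' = s := Prod.mk.injEq .. ▸ Prod.ext_iff.mp heq
        exact ⟨(Finset.subset_erase.1 hsub).2, by omega⟩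
    have hinj := Stmt6.hmap_injOn (r := r)
    rw [hset] at hinj
    rw [hset, Set.ncard_image_of_injOn hinj, Set.ncard_coe_finset]
    have hdisj : ∀ i ∈ (Finset.univ : Finset (Fin r)), ∀ j ∈ (Finset.univ : Finset (Fin r)),
        i ≠ j →
        Disjoint ((Finset.powersetCard k (Finset.univ.erase i)).image (fun s => (i, s)))
          ((Finset.powersetCard k (Finset.univ.erase j)).image (fun s => (j, s))) := by
      intro i _ j _ hij
      rw [Finset.disjoint_left]
      rintro p hp hq
      obtain ⟨s1, -, rfl⟩ := Finset.mem_image.1 hp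
      obtain ⟨s2, -, heq⟩ := Finset.mem_image.1 hq
      exact hij ((Prod.ext_iff.mp heq).1.symm)
    rw [hF, Finset.card_biUnion hdisj]
    have hcardi : ∀ i : Fin r,
        ((Finset.powersetCard k (Finset.univ.erase i)).image (fun s => (i, s))).card
        = (r - 1).choose k := by
      intro i
      rw [Finset.card_image_of_injective _ (fun a b h => (Prod.ext_iff.mp h).2),
        Finset.card_powersetCard, Finset.card_erase_of_mem (Finset.mem_univ i),
        Finset.card_univ, Fintype.card_fin]
    simp only [hcardi]
    rw [Finset.sum_const, Finset.card_univ, Fintype.card_fin, smul_eq_mul]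
    have hk1 : k ≤ r - 1 := by omega
    have hk2 : r - 1 - k = k := by omega
    have hfac := Nat.choose_mul_factorial_mul_factorial hk1
    rw [hk2] at hfac
    have hrfac : r.factorial = (r * (r - 1).choose k) * (k.factorial) ^ 2 := by
      rw [← Nat.mul_factorial_pred (by omega : r ≠ 0), ← hfac]
      ring
    exact (Nat.div_eq_of_eq_mul_left (pow_pos k.factorial_pos 2) hrfac).symm
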